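/- arXiv:physics/0505034 — 3 statements merged into one kernel-verified Lean document; each statement's English description precedes it below -/
import Mathlib

section
/- Let P be a set of generators and p ∈ P. Then p is ≺-minimal in P if and only if there exists a cost function K for generators that attains its minimum over P at p, i.e. K(L p, T p) ≤ K(L p', T p') for all p' ∈ P. -/
open scoped NNReal

/-- `⪯` for generators: cheaper or equal in both length and time. -/
def genLE {X : Type*} (L : X → ℕ) (T : X → ℝ≥0) (p₁ p₂ : X) : Prop :=
  L p₁ ≤ L p₂ ∧ T p₁ ≤ T p₂

/-- `≺` for generators: always cheaper. -/
def genLT {X : Type*} (L : X → ℕ) (T : X → ℝ≥0) (p₁ p₂ : X) : Prop :=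
  genLE L T p₁ p₂ ∧ ¬ genLE L T p₂ p₁

/-- A cost function for generators: strictly monotone in each argument. -/
def IsGenCostFunction (K : ℕ → ℝ≥0 → ℝ≥0) : Prop :=
  (∀ l l' t, l < l' → K l t < K l' t) ∧ (∀ l t t', t < t' → K l t < K l t')

/-- `p` is `≺`-minimal in `P`. -/
def GenMinimal {X : Type*} (L : X → ℕ) (T : X → ℝ≥0) (P : Set X) (p : X) : Prop :=
  p ∈ P ∧ ¬ ∃ p' ∈ P, genLT L T p' p

theorem generator_minimal_iff_cost_min {X : Type*} (L : X → ℕ) (T : X → ℝ≥0)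
    (P : Set X) (p : X) (hp : p ∈ P) :
    GenMinimal L T P p ↔
      ∃ K : ℕ → ℝ≥0 → ℝ≥0, IsGenCostFunction K ∧
        ∀ p' ∈ P, K (L p) (T p) ≤ K (L p') (T p') := by

  constructor
  · rintro ⟨-, hmin⟩
    push_neg at hmin
    set c : ℝ≥0 := T p + 1 with hc
    set M : ℝ≥0 := c * (L p : ℝ≥0) + T p with hM
    refine ⟨fun l t => c * (l : ℝ≥0) + (if t ≤ T p then t else t + M), ⟨?_, ?_⟩, ?_⟩
    · intro l l' t hll
      have hc0 : (0:ℝ≥0) < c := by positivity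
      have : c * (l : ℝ≥0) < c * (l' : ℝ≥0) := by
        exact mul_lt_mul_of_pos_left (by exact_mod_cast hll) hc0
      exact add_lt_add_left this _
    · intro l t t' htt
      apply add_lt_add_right
      rcases le_or_gt t (T p) with h1 | h1 <;> rcases le_or_gt t' (T p) with h2 | h2
      · simp only [if_pos h1, if_pos h2]; exact htt
      · simp only [if_pos h1, if_neg (not_le.mpr h2)]
        exact htt.trans_le le_self_add
      · exact absurd htt (not_lt.mpr (h2.trans h1.le))
      · simp only [if_neg (not_le.mpr h1), if_neg (not_le.mpr h2)]
        exact add_lt_add_left htt _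
    · intro p' hp'
      have hnlt := hmin p' hp'
      simp only [if_pos le_rfl]
      by_cases hle : genLE L T p p'
      · obtain ⟨h1, h2⟩ := hle
        have : c * (L p : ℝ≥0) ≤ c * (L p' : ℝ≥0) :=
          mul_le_mul_right (by exact_mod_cast h1) c
        by_cases h3 : T p' ≤ T p <;> simp only [if_pos, if_neg, h3]
        · exact add_le_add this h2
        · exact add_le_add this (h2.trans le_self_add)
      · have h4 : ¬ genLE L T p' p := fun h => hnlt ⟨h, fun h' => hle h'⟩
        rw [genLE, not_and_or, not_le, not_le] at h4
        rcases h4 with h4 | h4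
        · have h5 : (L p : ℝ≥0) + 1 ≤ (L p') := by exact_mod_cast h4
          have : c * (L p : ℝ≥0) + c ≤ c * (L p' : ℝ≥0) := by
            calc c * (L p : ℝ≥0) + c = c * ((L p : ℝ≥0) + 1) := by ring
              _ ≤ c * (L p') := mul_le_mul_right h5 c
          calc c * (L p : ℝ≥0) + T p ≤ c * (L p : ℝ≥0) + c := by
                apply add_le_add_right; rw [hc]; exact le_self_add
            _ ≤ c * (L p' : ℝ≥0) := this
            _ ≤ _ := le_self_add
        · rw [if_neg (not_le.mpr h4)]
          calc c * (L p : ℝ≥0) + T p = M := rfl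
            _ ≤ T p' + M := le_add_self
            _ ≤ _ := le_add_self
  · rintro ⟨K, ⟨hK1, hK2⟩, hmin⟩
    refine ⟨hp, ?_⟩
    rintro ⟨p', hp', ⟨⟨h1, h2⟩, h3⟩⟩
    have hlt : K (L p') (T p') < K (L p) (T p) := by
      rw [genLE, not_and_or, not_le, not_le] at h3
      rcases h3 with h3 | h3
      · calc K (L p') (T p') ≤ K (L p') (T p) := by
              rcases h2.lt_or_eq with h | h
              · exact (hK2 _ _ _ h).le
              · rw [h]
          _ < K (L p) (T p) := hK1 _ _ _ h3
      · calc K (L p') (T p') < K (L p') (T p) := hK2 _ _ _ h3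
          _ ≤ K (L p) (T p) := by
              rcases h1.lt_or_eq with h | h
              · exact (hK1 _ _ _ h).le
              · rw [h]
    exact absurd (hmin p' hp') (not_le.mpr hlt)
end

section
/- Let P be a set of tests and p ∈ P. Then p is ≺-minimal in P if and only if there exists a cost function K for tests that attains its minimum over P at p, i.e. K(L p, T p, N p) ≤ K(L p', T p', N p') for all p' ∈ P. -/
open scoped NNReal

/-- `⪯` for tests: cheaper or equal in length, time, and number of runs. -/
def testLE {X : Type*} (L : X → ℕ) (T N : X → ℝ≥0) (p₁ p₂ : X) : Prop :=
  L p₁ ≤ L p₂ ∧ T p₁ ≤ T p₂ ∧ N p₁ ≤ N p₂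

/-- `≺` for tests: always cheaper. -/
def testLT {X : Type*} (L : X → ℕ) (T N : X → ℝ≥0) (p₁ p₂ : X) : Prop :=
  testLE L T N p₁ p₂ ∧ ¬ testLE L T N p₂ p₁

/-- A cost function for tests: strictly monotone in each of its three arguments. -/
def IsTestCostFunction (K : ℕ → ℝ≥0 → ℝ≥0 → ℝ≥0) : Prop :=
  (∀ l l' t n, l < l' → K l t n < K l' t n) ∧
  (∀ l t t' n, t < t' → K l t n < K l t' n) ∧
  (∀ l t n n', n < n' → K l t n < K l t n')

/-- `p` is `≺`-minimal in `P`. -/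
def TestMinimal {X : Type*} (L : X → ℕ) (T N : X → ℝ≥0) (P : Set X) (p : X) : Prop :=
  p ∈ P ∧ ¬ ∃ p' ∈ P, testLT L T N p' p

theorem test_minimal_iff_cost_min {X : Type*} (L : X → ℕ) (T N : X → ℝ≥0)
    (P : Set X) (p : X) (hp : p ∈ P) :
    TestMinimal L T N P p ↔
      ∃ K : ℕ → ℝ≥0 → ℝ≥0 → ℝ≥0, IsTestCostFunction K ∧
        ∀ p' ∈ P, K (L p) (T p) (N p) ≤ K (L p') (T p') (N p') := by
  constructor
  · rintro ⟨-, hmin⟩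
    -- bounded strictly monotone pieces plus a jump above the value at p
    set φ : ℝ≥0 → ℝ≥0 → ℝ≥0 := fun a x => x / (1 + x) + (if a < x then 3 else 0) with hφ
    have hlt : ∀ a x y : ℝ≥0, x < y → φ a x < φ a y := by
      intro a x y hxy
      apply add_lt_add_of_lt_of_le
      · rw [div_lt_div_iff₀ (by positivity) (by positivity)]
        calc x * (1 + y) = x + x * y := by ring
          _ < y + x * y := add_lt_add_left hxy _
          _ = y * (1 + x) := by ring
      · split_ifs with h1 h2
        · exact le_rfl
        · exact absurd (h1.trans hxy) h2
        · exact zero_le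
        · exact le_rfl
    have hle : ∀ a x y : ℝ≥0, x ≤ y → φ a x ≤ φ a y := by
      intro a x y hxy
      rcases hxy.lt_or_eq with h | h
      · exact (hlt a x y h).le
      · rw [h]
    have hself : ∀ a : ℝ≥0, φ a a < 1 := by
      intro a
      simp only [hφ, if_neg (lt_irrefl a)]
      rw [add_zero]
      exact (div_lt_one (by positivity)).mpr (lt_add_of_pos_left a one_pos)
    have hjump : ∀ a x : ℝ≥0, a < x → 3 ≤ φ a x := by
      intro a x h
      simp only [hφ, if_pos h]
      exact le_add_self
    refine ⟨fun l t n => φ (L p) l + φ (T p) t + φ (N p) n, ⟨?_, ?_, ?_⟩, ?_⟩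
    · intro l l' t n h
      have : φ (L p) (l : ℝ≥0) < φ (L p) (l' : ℝ≥0) :=
        hlt _ _ _ (by exact_mod_cast h)
      exact add_lt_add_left (add_lt_add_left this _) _
    · intro l t t' n h
      exact add_lt_add_left (add_lt_add_right (hlt _ _ _ h) _) _
    · intro l t n n' h
      exact add_lt_add_right (hlt _ _ _ h) _
    · intro p' hp'
      by_cases hLE : testLE L T N p' p
      · -- then p ⪯ p' as well, by minimality
        have hLE' : testLE L T N p p' := by
          by_contra hc
          exact hmin ⟨p', hp', hLE, hc⟩
        obtain ⟨h1, h2, h3⟩ := hLE'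
        exact add_le_add (add_le_add (hle _ _ _ (by exact_mod_cast h1)) (hle _ _ _ h2))
          (hle _ _ _ h3)
      · -- p' is strictly bigger than p in some coordinate, so its cost is ≥ 3
        have hKp : φ (L p) (L p) + φ (T p) (T p) + φ (N p) (N p) < 3 := by
          calc φ (L p) (L p) + φ (T p) (T p) + φ (N p) (N p)
              < 1 + 1 + 1 := add_lt_add (add_lt_add (hself _) (hself _)) (hself _)
            _ = 3 := by norm_num
        have hKp' : (3 : ℝ≥0) ≤ φ (L p) (L p') + φ (T p) (T p') + φ (N p) (N p') := by
          simp only [testLE, not_and_or, not_le] at hLE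
          rcases hLE with h | h | h
          · have hc : (L p : ℝ≥0) < (L p' : ℝ≥0) := by exact_mod_cast h
            exact (hjump _ _ hc).trans (le_add_right (le_add_right le_rfl))
          · exact (hjump _ _ h).trans (le_add_right (le_add_left le_rfl))
          · exact (hjump _ _ h).trans (le_add_left le_rfl)
        exact hKp.le.trans hKp'
  · rintro ⟨K, ⟨hK1, hK2, hK3⟩, hKmin⟩
    refine ⟨hp, ?_⟩
    rintro ⟨p', hp', ⟨⟨h1, h2, h3⟩, hnle⟩⟩
    -- monotone (non-strict) in each coordinate
    have m1 : ∀ l l' t n, l ≤ l' → K l t n ≤ K l' t n := fun l l' t n h =>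
      h.lt_or_eq.elim (fun h => (hK1 _ _ _ _ h).le) (fun h => by rw [h])
    have m2 : ∀ l t t' n, t ≤ t' → K l t n ≤ K l t' n := fun l t t' n h =>
      h.lt_or_eq.elim (fun h => (hK2 _ _ _ _ h).le) (fun h => by rw [h])
    have m3 : ∀ l t n n', n ≤ n' → K l t n ≤ K l t n' := fun l t n n' h =>
      h.lt_or_eq.elim (fun h => (hK3 _ _ _ _ h).le) (fun h => by rw [h])
    have hstrict : K (L p') (T p') (N p') < K (L p) (T p) (N p) := by
      simp only [testLE, not_and_or, not_le] at hnle
      rcases hnle with h | h | h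
      · exact (hK1 _ _ _ _ h).trans_le ((m2 _ _ _ _ h2).trans (m3 _ _ _ _ h3))
      · exact ((m1 _ _ _ _ h1).trans_lt (hK2 _ _ _ _ h)).trans_le (m3 _ _ _ _ h3)
      · exact ((m1 _ _ _ _ h1).trans (m2 _ _ _ _ h2)).trans_lt (hK3 _ _ _ _ h)
    exact absurd (hKmin p' hp') (not_le.mpr hstrict)
end

section
/- Let D be a nonempty finite type, let P and Q be probability measures on D with P ≠ Q, and let α, γ be real numbers with 0 < α < γ < 1. Then there exist a natural number N and a function φ : (Fin N → D) → Bool such that the probability of the event {φ = true} under the N-fold product measure P^⊗N is at most α, while its probability under the N-fold product measure Q^⊗N is at least γ. -/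
open MeasureTheory

/-- Second moment bound: the centered empirical count of `d` over `N` i.i.d. samples from `P`
has second moment at most `N`. -/
theorem aux_moment {D : Type*} [Fintype D] [DecidableEq D] [MeasurableSpace D]
    [MeasurableSingletonClass D] (P : Measure D) [IsProbabilityMeasure P] (d : D) (N : ℕ) :
    ∫ ω : Fin N → D, (∑ i, ((if ω i = d then (1:ℝ) else 0) - (P {d}).toReal)) ^ 2
      ∂(Measure.pi fun _ : Fin N => P) ≤ N := by
  letI : MeasureSpace D := ⟨P⟩
  haveI : IsProbabilityMeasure (volume : Measure D) := ‹IsProbabilityMeasure P›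
  set p : ℝ := (P {d}).toReal with hp
  set h : D → ℝ := fun x => (if x = d then 1 else 0) - p with hh
  have hμ : (Measure.pi fun _ : Fin N => P) = (volume : Measure (Fin N → D)) := by
    rfl
  have hp0 : 0 ≤ p := ENNReal.toReal_nonneg
  have hp1 : p ≤ 1 := by
    simpa using ENNReal.toReal_mono ENNReal.one_ne_top (prob_le_one (μ := P) (s := {d}))
  have hint : ∀ f : D → ℝ, Integrable f P := fun f => Integrable.of_finite
  have hint' : ∀ f : (Fin N → D) → ℝ, Integrable f volume := fun f => Integrable.of_finite
  have hInt_h : ∫ x, h x ∂P = 0 := by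
    have h1 : ∫ x, (if x = d then (1:ℝ) else 0) ∂P = p := by
      have he : (fun x => if x = d then (1:ℝ) else 0)
          = Set.indicator ({d} : Set D) (fun _ => (1:ℝ)) := by
        funext x; simp [Set.indicator_apply]
      rw [he, integral_indicator_const _ (measurableSet_singleton d)]
      simp [hp, measureReal_def]
    rw [hh]
    rw [integral_sub (hint _) (hint _), h1, integral_const]
    simp
  have hInt_h2 : ∫ x, h x * h x ∂P ≤ 1 := by
    have hb : ∀ x, h x * h x ≤ 1 := by
      intro x; rw [hh]; dsimp only; split_ifs <;> nlinarith
    calc ∫ x, h x * h x ∂P ≤ ∫ _x, (1:ℝ) ∂P := integral_mono (hint _) (hint _) hb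
      _ = 1 := by simp
  have hInt_h' : ∫ x, h x = 0 := hInt_h
  have hInt_h2' : ∫ x, h x * h x ≤ 1 := hInt_h2
  have hInt_h2e : ∫ x, h x * h x = ∫ x, h x * h x ∂P := rfl
  rw [hμ]
  show ∫ ω : Fin N → D, (∑ i, h (ω i)) ^ 2 ≤ (N : ℝ)
  have expand : ∀ ω : Fin N → D, (∑ i, h (ω i)) ^ 2 = ∑ i, ∑ j, h (ω i) * h (ω j) := by
    intro ω; rw [sq, Finset.sum_mul_sum]
  have hsplit : ∫ ω : Fin N → D, (∑ i, h (ω i)) ^ 2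
      = ∑ i : Fin N, ∑ j : Fin N, ∫ ω : Fin N → D, h (ω i) * h (ω j) := by
    simp_rw [expand]
    rw [integral_finset_sum _ (fun i _ => hint' _)]
    exact Finset.sum_congr rfl fun i _ => integral_finset_sum _ (fun j _ => hint' _)
  have hterm : ∀ i j : Fin N, ∫ ω : Fin N → D, h (ω i) * h (ω j)
      ≤ if i = j then 1 else 0 := by
    intro i j
    by_cases hij : i = j
    · subst hij
      simp only [if_pos rfl]
      set c : Fin N → D → ℝ := fun k x => if i = k then h x * h x else 1 with hc
      have hrw : ∀ ω : Fin N → D, h (ω i) * h (ω i) = ∏ k, c k (ω k) := by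
        intro ω
        have : ∏ k, c k (ω k) = ∏ k, (if i = k then h (ω k) * h (ω k) else 1) := by
          apply Finset.prod_congr rfl; intro k _; by_cases hk : i = k <;> simp [hc, hk]
        rw [this, Finset.prod_ite_eq]
        simp
      calc ∫ ω : Fin N → D, h (ω i) * h (ω i)
          = ∫ ω : Fin N → D, ∏ k, c k (ω k) := by simp_rw [hrw]
        _ = ∏ k, ∫ x, c k x := integral_fintype_prod_volume_eq_prod c
        _ = ∫ x, h x * h x ∂P := by
            have : ∀ k, ∫ x, c k x = if i = k then ∫ x, h x * h x ∂P else 1 := by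
              intro k; by_cases hk : i = k <;> simp [hc, hk, hInt_h2e]
            simp_rw [this]
            rw [Finset.prod_ite_eq]; simp
        _ ≤ 1 := hInt_h2
    · simp only [if_neg hij]
      set c : Fin N → D → ℝ := fun k x => if k = i then h x else if k = j then h x else 1 with hc
      have hrw : ∀ ω : Fin N → D, h (ω i) * h (ω j) = ∏ k, c k (ω k) := by
        intro ω
        have hsub : ∏ k ∈ ({i, j} : Finset (Fin N)), c k (ω k) = ∏ k, c k (ω k) := by
          apply Finset.prod_subset (Finset.subset_univ _)
          intro x _ hx
          simp only [Finset.mem_insert, Finset.mem_singleton, not_or] at hx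
          simp [hc, hx.1, hx.2]
        rw [← hsub, Finset.prod_pair hij]
        simp [hc, hij, Ne.symm hij]
      have hfac : ∀ k, ∫ x, c k x = if k = i then (0:ℝ) else if k = j then 0 else 1 := by
        intro k
        by_cases hk : k = i
        · simp [hc, hk, hInt_h']
        · by_cases hk' : k = j <;> simp [hc, hk, hk', hInt_h']
      have : ∫ ω : Fin N → D, h (ω i) * h (ω j) = ∏ k, ∫ x, c k x := by
        simp_rw [hrw]; exact integral_fintype_prod_volume_eq_prod c
      rw [this]
      have : ∏ k, ∫ x, c k x = 0 := by
        apply Finset.prod_eq_zero (Finset.mem_univ i)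
        simp [hfac i]
      rw [this]
  calc ∫ ω : Fin N → D, (∑ i, h (ω i)) ^ 2
      = ∑ i : Fin N, ∑ j : Fin N, ∫ ω : Fin N → D, h (ω i) * h (ω j) := hsplit
    _ ≤ ∑ i : Fin N, ∑ j : Fin N, (if i = j then (1:ℝ) else 0) :=
        Finset.sum_le_sum fun i _ => Finset.sum_le_sum fun j _ => hterm i j
    _ = N := by simp [Finset.sum_ite_eq]

/-- Markov/Chebyshev style bound on a finite probability space. -/
theorem aux_markov {Ω : Type*} [Fintype Ω] [MeasurableSpace Ω] [MeasurableSingletonClass Ω]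
    (μ : Measure Ω) [IsProbabilityMeasure μ] (g : Ω → ℝ) (c M : ℝ) (hc : 0 < c)
    (hint : ∫ ω, g ω ^ 2 ∂μ ≤ M) (A : Set Ω) (hA : ∀ ω ∈ A, c ≤ |g ω|) :
    μ A ≤ ENNReal.ofReal (M / c ^ 2) := by
  have hsub : A ⊆ {ω | c ^ 2 ≤ g ω ^ 2} := by
    intro ω hω
    have h1 := hA ω hω
    have h2 : c ^ 2 ≤ |g ω| ^ 2 := by nlinarith [abs_nonneg (g ω)]
    simpa [sq_abs] using h2
  have h1 : c ^ 2 * (μ {ω | c ^ 2 ≤ g ω ^ 2}).toReal ≤ ∫ ω, g ω ^ 2 ∂μ :=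
    mul_meas_ge_le_integral_of_nonneg (Filter.Eventually.of_forall fun ω => sq_nonneg _)
      Integrable.of_finite _
  have hmono : (μ A).toReal ≤ (μ {ω | c ^ 2 ≤ g ω ^ 2}).toReal :=
    ENNReal.toReal_mono (measure_ne_top _ _) (measure_mono hsub)
  have h2 : (μ A).toReal ≤ M / c ^ 2 := by
    rw [le_div_iff₀ (by positivity)]
    nlinarith
  calc μ A = ENNReal.ofReal (μ A).toReal := (ENNReal.ofReal_toReal (measure_ne_top _ _)).symm
    _ ≤ ENNReal.ofReal (M / c ^ 2) := ENNReal.ofReal_le_ofReal h2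

theorem aux_sum_singleton {D : Type*} [Fintype D] [MeasurableSpace D]
    [MeasurableSingletonClass D] (μ : Measure D) : ∑ a : D, μ {a} = μ Set.univ := by
  rw [← measure_biUnion_finset ?_ (fun b _ => measurableSet_singleton b)]
  · congr 1
    simp only [Set.mem_univ, Set.iUnion_true, Finset.mem_univ]
    exact Set.iUnion_of_singleton D
  · intro a _ b _ hab
    exact Set.disjoint_singleton.mpr hab

theorem exists_test_separating {D : Type*} [Fintype D] [Nonempty D]
    [MeasurableSpace D] [MeasurableSingletonClass D]
    (P Q : Measure D) [IsProbabilityMeasure P] [IsProbabilityMeasure Q]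
    (hPQ : P ≠ Q) (α γ : ℝ) (hα : 0 < α) (hαγ : α < γ) (hγ : γ < 1) :
    ∃ (N : ℕ) (φ : (Fin N → D) → Bool),
      (Measure.pi fun _ : Fin N => P) {ω | φ ω = true} ≤ ENNReal.ofReal α ∧
      ENNReal.ofReal γ ≤ (Measure.pi fun _ : Fin N => Q) {ω | φ ω = true} := by
  classical
  -- Step 1: find d with (P {d}).toReal < (Q {d}).toReal
  obtain ⟨d0, hd0⟩ : ∃ a : D, P {a} ≠ Q {a} := by
    by_contra hc
    push_neg at hc
    exact hPQ (MeasureTheory.Measure.ext_iff_singleton.mpr hc)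
  set f : D → ℝ := fun a => (P {a}).toReal with hf
  set g : D → ℝ := fun a => (Q {a}).toReal with hg
  have hfg0 : f d0 ≠ g d0 := by
    intro h
    exact hd0 ((ENNReal.toReal_eq_toReal_iff' (measure_ne_top P _) (measure_ne_top Q _)).mp h)
  have hsumf : ∑ a : D, f a = 1 := by
    rw [hf, ← ENNReal.toReal_sum (fun a _ => measure_ne_top P _)]
    simp [aux_sum_singleton]
  have hsumg : ∑ a : D, g a = 1 := by
    rw [hg, ← ENNReal.toReal_sum (fun a _ => measure_ne_top Q _)]
    simp [aux_sum_singleton]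
  obtain ⟨d, hd⟩ : ∃ a : D, f a < g a := by
    by_contra hc
    push_neg at hc
    have hlt : g d0 < f d0 := lt_of_le_of_ne (hc d0) (Ne.symm hfg0)
    have : ∑ a : D, g a < ∑ a : D, f a :=
      Finset.sum_lt_sum (fun a _ => hc a) ⟨d0, Finset.mem_univ d0, hlt⟩
    rw [hsumf, hsumg] at this
    exact lt_irrefl _ this
  set p : ℝ := f d with hpdef
  set q : ℝ := g d with hqdef
  set δ : ℝ := q - p with hδdef
  have hδ : 0 < δ := by simp [hδdef]; linarith
  set ε : ℝ := min α (1 - γ) with hεdef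
  have hε : 0 < ε := lt_min hα (by linarith)
  -- Step 2: choose N
  obtain ⟨N, hN⟩ := exists_nat_gt (4 / (δ ^ 2 * ε))
  have hNpos : 0 < (N : ℝ) := lt_trans (by positivity) hN
  have hkey : 4 / ((N : ℝ) * δ ^ 2) ≤ ε := by
    rw [div_le_iff₀ (by positivity)]
    rw [div_lt_iff₀ (by positivity)] at hN
    nlinarith
  set c : ℝ := (N : ℝ) * δ / 2 with hcdef
  have hc : 0 < c := by positivity
  have hc2 : (N : ℝ) / c ^ 2 = 4 / ((N : ℝ) * δ ^ 2) := by
    rw [hcdef]; field_simp; ring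
  set S : (Fin N → D) → ℝ := fun ω => ∑ i, (if ω i = d then (1:ℝ) else 0) with hSdef
  set T : ℝ := (N : ℝ) * (p + q) / 2 with hTdef
  refine ⟨N, fun ω => decide (T ≤ S ω), ?_, ?_⟩
  · -- P side
    have hAeq : {ω : Fin N → D | (decide (T ≤ S ω)) = true} = {ω : Fin N → D | T ≤ S ω} := by
      ext ω; simp
    rw [hAeq]
    have hSum : ∀ ω : Fin N → D, S ω - (N : ℝ) * p
        = ∑ i, ((if ω i = d then (1:ℝ) else 0) - p) := by
      intro ω
      rw [Finset.sum_sub_distrib, hSdef]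
      simp [mul_comm]
    have hmom : ∫ ω : Fin N → D, (S ω - (N : ℝ) * p) ^ 2
        ∂(Measure.pi fun _ : Fin N => P) ≤ (N : ℝ) := by
      simp_rw [hSum]
      exact aux_moment P d N
    have hPbound := aux_markov (Measure.pi fun _ : Fin N => P)
      (fun ω => S ω - (N : ℝ) * p) c (N : ℝ) hc hmom {ω : Fin N → D | T ≤ S ω}
      (by
        intro ω hω
        have h1 : T ≤ S ω := hω
        have h2 : c ≤ S ω - (N : ℝ) * p := by
          rw [hcdef, hTdef] at *
          have : (N : ℝ) * (p + q) / 2 - (N : ℝ) * p = (N : ℝ) * δ / 2 := by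
            rw [hδdef]; ring
          linarith
        exact h2.trans (le_abs_self _))
    refine hPbound.trans (ENNReal.ofReal_le_ofReal ?_)
    rw [hc2]
    exact hkey.trans (min_le_left _ _)
  · -- Q side
    have hAeq : {ω : Fin N → D | (decide (T ≤ S ω)) = true} = {ω : Fin N → D | T ≤ S ω} := by
      ext ω; simp
    rw [hAeq]
    set A : Set (Fin N → D) := {ω : Fin N → D | T ≤ S ω} with hAdef
    have hAm : MeasurableSet A := (Set.to_countable A).measurableSet
    have hSum : ∀ ω : Fin N → D, S ω - (N : ℝ) * q
        = ∑ i, ((if ω i = d then (1:ℝ) else 0) - q) := by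
      intro ω
      rw [Finset.sum_sub_distrib, hSdef]
      simp [mul_comm]
    have hmom : ∫ ω : Fin N → D, (S ω - (N : ℝ) * q) ^ 2
        ∂(Measure.pi fun _ : Fin N => Q) ≤ (N : ℝ) := by
      simp_rw [hSum]
      exact aux_moment Q d N
    have hQbound := aux_markov (Measure.pi fun _ : Fin N => Q)
      (fun ω => S ω - (N : ℝ) * q) c (N : ℝ) hc hmom Aᶜ
      (by
        intro ω hω
        have h1 : ¬ (T ≤ S ω) := hω
        push_neg at h1
        have h2 : c ≤ (N : ℝ) * q - S ω := by
          rw [hcdef, hTdef] at *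
          have : (N : ℝ) * q - (N : ℝ) * (p + q) / 2 = (N : ℝ) * δ / 2 := by
            rw [hδdef]; ring
          linarith
        calc c ≤ (N : ℝ) * q - S ω := h2
          _ = -(S ω - (N : ℝ) * q) := by ring
          _ ≤ |S ω - (N : ℝ) * q| := neg_le_abs _)
    have hcompl : (Measure.pi fun _ : Fin N => Q) Aᶜ ≤ ENNReal.ofReal (1 - γ) := by
      refine hQbound.trans (ENNReal.ofReal_le_ofReal ?_)
      rw [hc2]
      exact hkey.trans (min_le_right _ _)
    have hadd : (Measure.pi fun _ : Fin N => Q) A + (Measure.pi fun _ : Fin N => Q) Aᶜ = 1 := by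
      rw [measure_add_measure_compl hAm, measure_univ]
    have h1 : ENNReal.ofReal γ + (Measure.pi fun _ : Fin N => Q) Aᶜ
        ≤ (Measure.pi fun _ : Fin N => Q) A + (Measure.pi fun _ : Fin N => Q) Aᶜ := by
      rw [hadd]
      calc ENNReal.ofReal γ + (Measure.pi fun _ : Fin N => Q) Aᶜ
          ≤ ENNReal.ofReal γ + ENNReal.ofReal (1 - γ) := add_le_add le_rfl hcompl
        _ = ENNReal.ofReal 1 := by
            rw [← ENNReal.ofReal_add (by linarith) (by linarith)]; norm_num
        _ = 1 := ENNReal.ofReal_one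
    exact ENNReal.le_of_add_le_add_right (measure_ne_top _ _) h1
end
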